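/- Kleinman monotonicity: Let A be a real q×q matrix, B a real q×m matrix, Q real symmetric positive definite q×q, and R real symmetric positive definite m×m. Let K be a real m×q matrix with A − BK Hurwitz, let P be the symmetric solution of (A − BK)ᵀ P + P (A − BK) + Q + Kᵀ R K = 0, set K' = R⁻¹ Bᵀ P, assume A − BK' is Hurwitz, and let P' be the symmetric solution of (A − BK')ᵀ P' + P' (A − BK') + Q + K'ᵀ R K' = 0. Then P' ⪯ P, i.e., P − P' is positive semidefinite. -/

import Mathlib

open Matrix

/-- Symmetric part of a real square matrix: `(A + Aᵀ)/2`. -/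
noncomputable def symPart {n : ℕ} (A : Matrix (Fin n) (Fin n) ℝ) : Matrix (Fin n) (Fin n) ℝ :=
  (1 / 2 : ℝ) • (A + Aᵀ)

theorem symPart_isHermitian {n : ℕ} (A : Matrix (Fin n) (Fin n) ℝ) :
    (symPart A).IsHermitian := by
  ext i j
  simp [symPart, Matrix.IsHermitian, Matrix.conjTranspose_apply, mul_comm, add_comm]
  ring

/-- Logarithmic 2-norm of a real square matrix: the largest eigenvalue of its
symmetric part `(A + Aᵀ)/2`. -/
noncomputable def mu2 {n : ℕ} (A : Matrix (Fin n) (Fin n) ℝ) : ℝ :=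
  ⨆ i, (symPart_isHermitian A).eigenvalues i

/-- Spectral norm of a real matrix: the operator norm induced by the Euclidean norm. -/
noncomputable def specNorm {m n : ℕ} (A : Matrix (Fin m) (Fin n) ℝ) : ℝ :=
  ‖LinearMap.toContinuousLinearMap (Matrix.toEuclideanLin A)‖

/-- A real square matrix is Hurwitz if every complex eigenvalue (i.e. every element of the
complex spectrum of its complexification) has strictly negative real part. -/
def IsHurwitz {n : ℕ} (A : Matrix (Fin n) (Fin n) ℝ) : Prop :=
  ∀ μ ∈ spectrum ℂ (A.map (Complex.ofReal ·)), μ.re < 0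

section KleinmanAux

open Polynomial Filter Topology


lemma eval_charpoly' {n : ℕ} (M : Matrix (Fin n) (Fin n) ℂ) (μ : ℂ) :
    (M.charpoly).eval μ = (μ • (1 : Matrix (Fin n) (Fin n) ℂ) - M).det := by
  have h : (M.charpoly).eval μ = (evalRingHom μ) M.charmatrix.det := rfl
  rw [h, RingHom.map_det]
  congr 1
  ext i j
  by_cases h : i = j <;>
    simp [charmatrix_apply, h, Matrix.one_apply, Matrix.diagonal_apply]

lemma det_ne_zero_of_isUnit {n : ℕ} {M : Matrix (Fin n) (Fin n) ℂ} (h : IsUnit M) :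
    M.det ≠ 0 :=
  IsUnit.ne_zero ((Matrix.isUnit_iff_isUnit_det M).mp h)

lemma isUnit_of_det_ne_zero' {n : ℕ} {M : Matrix (Fin n) (Fin n) ℂ} (h : M.det ≠ 0) :
    IsUnit M :=
  (Matrix.isUnit_iff_isUnit_det M).mpr (isUnit_iff_ne_zero.mpr h)

lemma sylvester_inj {n : ℕ} (H : Matrix (Fin n) (Fin n) ℝ) (hH : IsHurwitz H) :
    ∀ Y : Matrix (Fin n) (Fin n) ℝ, Hᵀ * Y + Y * H = 0 → Y = 0 := by
  intro Y hY
  set f : ℝ →+* ℂ := Complex.ofRealHom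
  set Hc : Matrix (Fin n) (Fin n) ℂ := H.map f with hHc
  set Xc : Matrix (Fin n) (Fin n) ℂ := Y.map f with hXcdef
  have hHc' : H.map (Complex.ofReal ·) = Hc := rfl
  have hXc : Hcᵀ * Xc + Xc * Hc = 0 := by
    have := congrArg (Matrix.map · f) hY
    simpa [Matrix.map_add, Matrix.map_mul, Matrix.transpose_map] using this
  have hcomm : Hcᵀ * Xc = Xc * (-Hc) := by
    have h1 : Hcᵀ * Xc = -(Xc * Hc) := eq_neg_of_add_eq_zero_left hXc
    rw [h1, mul_neg]
  have hpow : ∀ k : ℕ, Hcᵀ ^ k * Xc = Xc * (-Hc) ^ k := by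
    intro k
    induction k with
    | zero => simp
    | succ k ih =>
      rw [pow_succ, pow_succ, mul_assoc, hcomm, ← mul_assoc, ih, mul_assoc]
  have haeval : ∀ p : ℂ[X], (aeval Hcᵀ p) * Xc = Xc * (aeval (-Hc) p) := by
    intro p
    induction p using Polynomial.induction_on with
    | C a => simp [Algebra.commutes]
    | add p q hp hq => rw [map_add, map_add, add_mul, mul_add, hp, hq]
    | monomial k a _ =>
      rw [_root_.map_mul, _root_.map_mul, aeval_C, aeval_C, map_pow, map_pow,
        aeval_X, aeval_X, mul_assoc, hpow, ← mul_assoc, Algebra.commutes, mul_assoc]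
  have hspec : ∀ μ : ℂ, (μ • (1 : Matrix (Fin n) (Fin n) ℂ) - Hc).det = 0 → μ.re < 0 := by
    intro μ hdet
    apply hH μ
    rw [hHc', spectrum.mem_iff, Algebra.algebraMap_eq_smul_one]
    intro hu
    exact det_ne_zero_of_isUnit hu hdet
  set p : ℂ[X] := (-Hc).charpoly with hp
  have hroots : ∀ a ∈ p.roots, IsUnit (Hcᵀ - algebraMap ℂ _ a) := by
    intro a ha
    have heval : p.eval a = 0 :=
      (Polynomial.mem_roots (Polynomial.Monic.ne_zero ((-Hc).charpoly_monic))).mp ha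
    rw [hp, eval_charpoly'] at heval
    have hre : (-a).re < 0 := by
      apply hspec
      have h3 : (-a) • (1 : Matrix (Fin n) (Fin n) ℂ) - Hc = -(a • 1 - -Hc) := by
        ext i j
        simp [Matrix.one_apply]
        ring
      rw [h3, Matrix.det_neg, heval, mul_zero]
    have hare : 0 < a.re := by simpa using hre
    have hnotspec : IsUnit (a • (1 : Matrix (Fin n) (Fin n) ℂ) - Hc) := by
      by_contra hcon
      have hmem : a ∈ spectrum ℂ Hc := by
        rw [spectrum.mem_iff, Algebra.algebraMap_eq_smul_one]; exact hcon
      have := hH a (by rwa [hHc'])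
      linarith
    apply isUnit_of_det_ne_zero'
    have h1 : Hcᵀ - algebraMap ℂ _ a = (Hc - a • 1)ᵀ := by
      rw [Matrix.transpose_sub, Matrix.transpose_smul, Matrix.transpose_one,
        Algebra.algebraMap_eq_smul_one]
    rw [h1, Matrix.det_transpose, show Hc - a • 1 = -(a • (1 : Matrix (Fin n) (Fin n) ℂ) - Hc)
      from (neg_sub _ _).symm, Matrix.det_neg]
    exact mul_ne_zero (pow_ne_zero _ (by norm_num)) (det_ne_zero_of_isUnit hnotspec)
  have hunit : IsUnit (aeval Hcᵀ p) := by
    have hsplit : p.Splits := IsAlgClosed.splits p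
    have hfact : p = (p.roots.map fun a => (Polynomial.X : ℂ[X]) - C a).prod :=
      hsplit.eq_prod_roots_of_monic ((-Hc).charpoly_monic)
    have key : ∀ s : Multiset ℂ, (∀ a ∈ s, IsUnit (Hcᵀ - algebraMap ℂ _ a)) →
        IsUnit (aeval Hcᵀ ((s.map fun a => (Polynomial.X : ℂ[X]) - C a).prod)) := by
      intro s
      induction s using Multiset.induction_on with
      | empty => simp
      | cons a t ih =>
        intro h
        rw [Multiset.map_cons, Multiset.prod_cons, _root_.map_mul]
        refine IsUnit.mul ?_ (ih fun x hx => h x (Multiset.mem_cons_of_mem hx))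
        simpa [map_sub, aeval_X, aeval_C] using h a (Multiset.mem_cons_self a t)
    rw [hfact]
    exact key _ hroots
  have hXc0 : Xc = 0 := by
    have h0 : (aeval Hcᵀ p) * Xc = 0 := by
      rw [haeval, hp, Matrix.aeval_self_charpoly, mul_zero]
    obtain ⟨u, hu⟩ := hunit
    calc Xc = (↑u⁻¹ * ↑u) * Xc := by rw [Units.inv_mul, one_mul]
    _ = ↑u⁻¹ * ((aeval Hcᵀ p) * Xc) := by rw [mul_assoc, hu]
    _ = 0 := by rw [h0, mul_zero]
  ext i j
  have := congrFun (congrFun hXc0 i) j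
  simpa [hXcdef, Matrix.map_apply, f] using this

lemma hurwitz_path {n : ℕ} (H : Matrix (Fin n) (Fin n) ℝ) (hH : IsHurwitz H) {s : ℝ}
    (h0 : 0 ≤ s) (h1 : s ≤ 1) : IsHurwitz ((1 - s) • H - s • 1) := by
  intro μ hμ
  have hmap : ((1 - s) • H - s • (1 : Matrix (Fin n) (Fin n) ℝ)).map (Complex.ofReal ·)
      = ((1 - s : ℝ) : ℂ) • (H.map (Complex.ofReal ·))
        - ((s : ℝ) : ℂ) • (1 : Matrix (Fin n) (Fin n) ℂ) := by
    ext i j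
    by_cases h : i = j <;>
      simp [Matrix.map_apply, Matrix.one_apply, h] <;> push_cast <;> ring
  set Hc : Matrix (Fin n) (Fin n) ℂ := H.map (Complex.ofReal ·) with hHc
  rw [spectrum.mem_iff, hmap, Algebra.algebraMap_eq_smul_one] at hμ
  by_cases hs : s = 1
  · subst hs
    simp only [sub_self, Complex.ofReal_zero, zero_smul, Complex.ofReal_one, one_smul,
      zero_sub, sub_neg_eq_add] at hμ
    have hne : μ = -1 := by
      by_contra h
      apply hμ
      apply isUnit_of_det_ne_zero'
      have e : μ • (1 : Matrix (Fin n) (Fin n) ℂ) + 1 = (μ + 1) • 1 := by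
        rw [add_smul, one_smul]
      rw [e, Matrix.det_smul, Matrix.det_one, mul_one]
      refine pow_ne_zero _ fun h' => h ?_
      linear_combination h'
    rw [hne]
    norm_num
  · have hc : (0 : ℝ) < 1 - s := lt_of_le_of_ne (by linarith) fun h => hs (by linarith)
    have hc0 : ((1 - s : ℝ) : ℂ) ≠ 0 := by exact_mod_cast ne_of_gt hc
    set ν : ℂ := (μ + s) / ((1 - s : ℝ) : ℂ) with hν
    have hfact : μ • (1 : Matrix (Fin n) (Fin n) ℂ)
        - (((1 - s : ℝ) : ℂ) • Hc - ((s:ℝ):ℂ) • 1) = ((1 - s : ℝ) : ℂ) • (ν • 1 - Hc) := by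
      rw [smul_sub, hν, smul_smul, mul_div_cancel₀ _ hc0]
      ext i j
      by_cases h : i = j <;> simp [Matrix.one_apply, h] <;> ring
    have hnu : ν ∈ spectrum ℂ Hc := by
      rw [spectrum.mem_iff, Algebra.algebraMap_eq_smul_one]
      intro hu
      apply hμ
      rw [hfact]
      have h1u : IsUnit (((1 - s:ℝ):ℂ) • (1 : Matrix (Fin n) (Fin n) ℂ)) := by
        apply isUnit_of_det_ne_zero'
        rw [Matrix.det_smul, Matrix.det_one, mul_one]
        exact pow_ne_zero _ hc0
      rw [show ((1 - s:ℝ):ℂ) • (ν • 1 - Hc)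
          = (((1 - s:ℝ):ℂ) • (1 : Matrix (Fin n) (Fin n) ℂ)) * (ν • 1 - Hc) by
        rw [Matrix.smul_mul, one_mul]]
      exact h1u.mul hu
    have hre : ν.re < 0 := hH ν hnu
    have hμν : μ = ((1 - s:ℝ):ℂ) * ν - s := by
      rw [hν, mul_div_cancel₀ _ hc0]
      ring
    have hμre : μ.re = (1 - s) * ν.re - s := by
      rw [hμν]
      simp [Complex.sub_re, Complex.mul_re]
    rw [hμre]
    nlinarith


noncomputable def lyapMat (Hs : Matrix (Fin q) (Fin q) ℝ) :
    Matrix (Fin q × Fin q) (Fin q × Fin q) ℝ :=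
  Matrix.of fun p r =>
    Hs r.1 p.1 * (if p.2 = r.2 then (1:ℝ) else 0) + (if p.1 = r.1 then (1:ℝ) else 0) * Hs r.2 p.2

lemma lyapMat_mulVec (Hs Y : Matrix (Fin q) (Fin q) ℝ) (p : Fin q × Fin q) :
    (lyapMat Hs *ᵥ fun r => Y r.1 r.2) p = (Hsᵀ * Y + Y * Hs) p.1 p.2 := by
  simp only [lyapMat, Matrix.mulVec, dotProduct, Matrix.of_apply,
    Fintype.sum_prod_type, add_mul, Finset.sum_add_distrib, Matrix.add_apply,
    Matrix.mul_apply, Matrix.transpose_apply, mul_ite, ite_mul, mul_one, one_mul,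
    mul_zero, zero_mul, Finset.sum_ite_eq, Finset.sum_ite_eq', Finset.mem_univ, if_true]
  rw [Finset.sum_comm]
  simp [Finset.sum_ite_eq, mul_comm]

lemma lyapMat_mulVec_zero {Hs : Matrix (Fin q) (Fin q) ℝ}
    (hinj : ∀ Y : Matrix (Fin q) (Fin q) ℝ, Hsᵀ * Y + Y * Hs = 0 → Y = 0)
    (v : Fin q × Fin q → ℝ) (hv : lyapMat Hs *ᵥ v = 0) : v = 0 := by
  have hY : (Matrix.of fun a b => v (a, b)) = 0 := by
    apply hinj
    ext i j
    have h1 := lyapMat_mulVec Hs (Matrix.of fun a b => v (a, b)) (i, j)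
    have h2 : (lyapMat Hs *ᵥ fun r : Fin q × Fin q =>
        (Matrix.of fun a b => v (a, b)) r.1 r.2) (i, j) = 0 := by
      have he : (fun r : Fin q × Fin q => (Matrix.of fun a b => v (a, b)) r.1 r.2) = v := by
        funext r; rfl
      rw [he, hv]
      rfl
    rw [← h1, h2]
    simp
  funext p
  have := congrFun (congrFun hY p.1) p.2
  simpa using this

lemma lyapMat_isUnit {Hs : Matrix (Fin q) (Fin q) ℝ}
    (hinj : ∀ Y : Matrix (Fin q) (Fin q) ℝ, Hsᵀ * Y + Y * Hs = 0 → Y = 0) :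
    IsUnit (lyapMat Hs) := by
  rw [← Matrix.mulVec_injective_iff_isUnit]
  intro v w hvw
  have h := lyapMat_mulVec_zero hinj (v - w) (by rw [Matrix.mulVec_sub, hvw, sub_self])
  exact sub_eq_zero.mp h

lemma isHermitian_of_transpose {q : ℕ} {M : Matrix (Fin q) (Fin q) ℝ} (h : Mᵀ = M) :
    M.IsHermitian := by
  show Mᴴ = M
  ext i j
  rw [Matrix.conjTranspose_apply, star_trivial]
  exact congrFun (congrFun h i) j

lemma real_conjTranspose_eq {m n : ℕ} (M : Matrix (Fin m) (Fin n) ℝ) : Mᴴ = Mᵀ := by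
  ext i j
  rw [Matrix.conjTranspose_apply, star_trivial, Matrix.transpose_apply]

lemma lyap_posdef {q : ℕ} (H : Matrix (Fin q) (Fin q) ℝ) (hH : IsHurwitz H)
    (X T : Matrix (Fin q) (Fin q) ℝ) (hXsym : Xᵀ = X) (hTsym : Tᵀ = T) (hT : T.PosDef)
    (heq : Hᵀ * X + X * H = -T) : X.PosDef := by
  classical
  set Hs : ℝ → Matrix (Fin q) (Fin q) ℝ := fun s => (1 - s) • H - s • 1 with hHsdef
  have hinj : ∀ s, 0 ≤ s → s ≤ 1 →
      ∀ Y : Matrix (Fin q) (Fin q) ℝ, (Hs s)ᵀ * Y + Y * (Hs s) = 0 → Y = 0 :=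
    fun s h0 h1 => sylvester_inj _ (hurwitz_path H hH h0 h1)
  have hdet : ∀ s, 0 ≤ s → s ≤ 1 → (lyapMat (Hs s)).det ≠ 0 := by
    intro s h0 h1
    have := (Matrix.isUnit_iff_isUnit_det _).mp (lyapMat_isUnit (hinj s h0 h1))
    exact this.ne_zero
  set w : Fin q × Fin q → ℝ := fun p => (-T) p.1 p.2 with hw
  set g : ℝ → Matrix (Fin q) (Fin q) ℝ :=
    fun s => Matrix.of fun i j => ((lyapMat (Hs s))⁻¹ *ᵥ w) (i, j) with hg
  -- g s solves the Lyapunov equation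
  have hsolve : ∀ s, 0 ≤ s → s ≤ 1 → (Hs s)ᵀ * g s + g s * (Hs s) = -T := by
    intro s h0 h1
    ext i j
    have h1' := lyapMat_mulVec (Hs s) (g s) (i, j)
    have h2 : (lyapMat (Hs s) *ᵥ fun r : Fin q × Fin q => g s r.1 r.2) (i, j) = w (i, j) := by
      have he : (fun r : Fin q × Fin q => g s r.1 r.2) = (lyapMat (Hs s))⁻¹ *ᵥ w := by
        funext r; rfl
      rw [he, Matrix.mulVec_mulVec, Matrix.mul_nonsing_inv _ (isUnit_iff_ne_zero.mpr (hdet s h0 h1)), Matrix.one_mulVec]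
    rw [← h1', h2]
  -- g s is symmetric
  have hsym : ∀ s, 0 ≤ s → s ≤ 1 → (g s)ᵀ = g s := by
    intro s h0 h1
    have h := hsolve s h0 h1
    have h2 : (Hs s)ᵀ * (g s)ᵀ + (g s)ᵀ * (Hs s) = -T := by
      have ht := congrArg Matrix.transpose h
      rw [Matrix.transpose_add, Matrix.transpose_mul, Matrix.transpose_mul,
        Matrix.transpose_transpose, Matrix.transpose_neg, hTsym] at ht
      rw [add_comm] at ht
      exact ht
    have hdiff : (Hs s)ᵀ * (g s - (g s)ᵀ) + (g s - (g s)ᵀ) * (Hs s) = 0 := by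
      rw [Matrix.mul_sub, Matrix.sub_mul, sub_add_sub_comm, h, h2, sub_self]
    have := hinj s h0 h1 _ hdiff
    rw [sub_eq_zero] at this
    exact this.symm
  -- g s has trivial kernel
  have hginj : ∀ s, 0 ≤ s → s ≤ 1 → ∀ v : Fin q → ℝ, g s *ᵥ v = 0 → v = 0 := by
    intro s h0 h1 v hv
    by_contra hvne
    have hq : 0 < v ⬝ᵥ (T *ᵥ v) := by simpa using (Matrix.posDef_iff_dotProduct_mulVec.mp hT).2 hvne
    have h := congrArg (fun M => v ⬝ᵥ (M *ᵥ v)) (hsolve s h0 h1)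
    simp only [Matrix.add_mulVec, dotProduct_add] at h
    have l1 : v ⬝ᵥ (((Hs s)ᵀ * g s) *ᵥ v) = 0 := by
      rw [← Matrix.mulVec_mulVec, hv, Matrix.mulVec_zero, dotProduct_zero]
    have l2 : v ⬝ᵥ ((g s * (Hs s)) *ᵥ v) = 0 := by
      rw [← Matrix.mulVec_mulVec, Matrix.dotProduct_mulVec]
      rw [← hsym s h0 h1, Matrix.vecMul_transpose, hv, zero_dotProduct]
    rw [l1, l2, Matrix.neg_mulVec, dotProduct_neg] at h
    linarith
  -- continuity of g
  have hgcont : ∀ s₀, 0 ≤ s₀ → s₀ ≤ 1 → ContinuousAt g s₀ := by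
    intro s₀ h0 h1
    have hΛ : Continuous (fun s => lyapMat (Hs s)) := by
      apply continuous_matrix
      intro p r
      simp only [lyapMat, hHsdef, Matrix.of_apply, Matrix.sub_apply, Matrix.smul_apply,
        Matrix.one_apply, smul_eq_mul]
      fun_prop
    have hinvc : ContinuousAt (fun s => (lyapMat (Hs s))⁻¹) s₀ := by
      have hrw : (fun s => (lyapMat (Hs s))⁻¹)
          = fun s => ((lyapMat (Hs s)).det)⁻¹ • (lyapMat (Hs s)).adjugate := by
        funext s; rw [Matrix.inv_def, Ring.inverse_eq_inv']
      rw [hrw]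
      apply ContinuousAt.fun_smul
      · have hdc : ContinuousAt (fun s => (lyapMat (Hs s)).det) s₀ :=
          (hΛ.matrix_det).continuousAt
        exact hdc.inv₀ (hdet s₀ h0 h1)
      · exact (hΛ.matrix_adjugate).continuousAt
    have hmv : ContinuousAt (fun s => (lyapMat (Hs s))⁻¹ *ᵥ w) s₀ := by
      have hcont2 : Continuous (fun M : Matrix (Fin q × Fin q) (Fin q × Fin q) ℝ => M *ᵥ w) :=
        continuous_id.matrix_mulVec continuous_const
      exact hcont2.continuousAt.comp hinvc
    have hofc : Continuous (fun u : (Fin q × Fin q → ℝ) =>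
        (Matrix.of fun i j => u (i, j) : Matrix (Fin q) (Fin q) ℝ)) := by
      apply continuous_matrix
      intro i j
      exact continuous_apply _
    exact hofc.continuousAt.comp hmv
  -- quadratic form continuity
  have quadCont : Continuous (fun pa : Matrix (Fin q) (Fin q) ℝ × (Fin q → ℝ) =>
      pa.2 ⬝ᵥ (pa.1 *ᵥ pa.2)) :=
    (continuous_snd).dotProduct ((continuous_fst).matrix_mulVec continuous_snd)
  -- the clopen set
  haveI : PreconnectedSpace (Set.Icc (0:ℝ) 1) := Subtype.preconnectedSpace isPreconnected_Icc
  set A : Set (Set.Icc (0:ℝ) 1) := {x | (g ↑x).PosDef} with hA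
  have hval : Continuous (fun x : Set.Icc (0:ℝ) 1 => (x : ℝ)) := continuous_subtype_val
  have hgcont' : ∀ x : Set.Icc (0:ℝ) 1, ContinuousAt (fun y : Set.Icc (0:ℝ) 1 => g ↑y) x :=
    fun x => (hgcont ↑x x.2.1 x.2.2).comp hval.continuousAt
  have quadAt : ∀ (x : Set.Icc (0:ℝ) 1) (v : Fin q → ℝ),
      ContinuousAt (fun y : Set.Icc (0:ℝ) 1 => v ⬝ᵥ (g ↑y *ᵥ v)) x := by
    intro x v
    exact quadCont.continuousAt.comp ((hgcont' x).prodMk continuousAt_const)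
  have hAclosed : IsClosed A := by
    rw [← isSeqClosed_iff_isClosed]
    intro u p hu hup
    have herm : (g ↑p).IsHermitian := isHermitian_of_transpose (hsym ↑p p.2.1 p.2.2)
    have hnonneg : ∀ v : Fin q → ℝ, 0 ≤ v ⬝ᵥ (g ↑p *ᵥ v) := by
      intro v
      have ht : Tendsto (fun n => v ⬝ᵥ (g ↑(u n) *ᵥ v)) atTop (𝓝 (v ⬝ᵥ (g ↑p *ᵥ v))) :=
        ((quadAt p v).tendsto).comp hup
      apply ge_of_tendsto ht
      filter_upwards with n
      rcases eq_or_ne v 0 with rfl | hv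
      · simp
      · exact le_of_lt (by simpa using (Matrix.posDef_iff_dotProduct_mulVec.mp (hu n)).2 hv)
    have hpsd : (g ↑p).PosSemidef := Matrix.posSemidef_iff_dotProduct_mulVec.mpr ⟨herm, fun v => by simpa using hnonneg v⟩
    refine Matrix.posDef_iff_dotProduct_mulVec.mpr ⟨herm, fun v hv => ?_⟩
    rcases lt_or_eq_of_le (hnonneg v) with hlt | heq0
    · simpa using hlt
    · exfalso
      have hker : g ↑p *ᵥ v = 0 := (hpsd.dotProduct_mulVec_zero_iff v).mp (by simpa using heq0.symm)
      exact hv (hginj ↑p p.2.1 p.2.2 v hker)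
  have hAopen : IsOpen A := by
    rw [← isClosed_compl_iff, ← isSeqClosed_iff_isClosed]
    intro u p hu hup
    have hun : ∀ n, ∃ v : Fin q → ℝ, ‖v‖ = 1 ∧ v ⬝ᵥ (g ↑(u n) *ᵥ v) ≤ 0 := by
      intro n
      have hnpd := hu n
      have herm : (g ↑(u n)).IsHermitian :=
        isHermitian_of_transpose (hsym _ (u n).2.1 (u n).2.2)
      by_contra hcon
      push_neg at hcon
      apply hnpd
      refine Matrix.posDef_iff_dotProduct_mulVec.mpr ⟨herm, fun v hv => ?_⟩
      by_contra hle
      push_neg at hle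
      have hle' : v ⬝ᵥ (g ↑(u n) *ᵥ v) ≤ 0 := by simpa using hle
      have hc : (0:ℝ) < ‖v‖ := norm_pos_iff.mpr hv
      have h1 := hcon (‖v‖⁻¹ • v) (by rw [norm_smul]; simp [abs_of_pos (inv_pos.mpr hc), inv_mul_cancel₀ hc.ne'])
      have hscale : (‖v‖⁻¹ • v) ⬝ᵥ (g ↑(u n) *ᵥ (‖v‖⁻¹ • v))
          = ‖v‖⁻¹ * ‖v‖⁻¹ * (v ⬝ᵥ (g ↑(u n) *ᵥ v)) := by
        rw [Matrix.mulVec_smul, dotProduct_smul, smul_dotProduct]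
        simp [smul_eq_mul]
        ring
      rw [hscale] at h1
      nlinarith [inv_pos.mpr hc]
    choose vn hvn1 hvn2 using hun
    obtain ⟨v, hvmem, φ, hφ, hconv⟩ :=
      (isCompact_sphere (0 : Fin q → ℝ) 1).tendsto_subseq
        (fun n => mem_sphere_zero_iff_norm.mpr (hvn1 n))
    intro hpd
    have hv0 : v ≠ 0 := by
      have := mem_sphere_zero_iff_norm.mp hvmem
      intro h; rw [h] at this; simp at this
    have h1 : Tendsto (fun k => g ↑(u (φ k))) atTop (𝓝 (g ↑p)) :=
      ((hgcont' p).tendsto).comp (hup.comp hφ.tendsto_atTop)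
    have hquadlim : Tendsto (fun k => (vn (φ k)) ⬝ᵥ (g ↑(u (φ k)) *ᵥ vn (φ k))) atTop
        (𝓝 (v ⬝ᵥ (g ↑p *ᵥ v))) := by
      have h2 : Tendsto (fun k => (g ↑(u (φ k)), vn (φ k))) atTop (𝓝 (g ↑p, v)) :=
        h1.prodMk_nhds hconv
      exact (quadCont.continuousAt.tendsto).comp h2
    have hle : v ⬝ᵥ (g ↑p *ᵥ v) ≤ 0 :=
      le_of_tendsto hquadlim (Eventually.of_forall fun k => hvn2 (φ k))
    have := (Matrix.posDef_iff_dotProduct_mulVec.mp hpd).2 hv0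
    simp only [star_trivial] at this
    linarith
  -- 1 ∈ A
  have h1mem : (⟨1, by norm_num⟩ : Set.Icc (0:ℝ) 1) ∈ A := by
    have hs1 : Hs 1 = -(1 : Matrix (Fin q) (Fin q) ℝ) := by
      rw [hHsdef]; simp
    have heq1 := hsolve 1 zero_le_one le_rfl
    rw [hs1] at heq1
    have h2 : g 1 + g 1 = T := by
      have hneg : -(g 1 + g 1) = -T := by
        rw [neg_add]
        simpa [Matrix.transpose_neg, Matrix.transpose_one, Matrix.neg_mul, Matrix.mul_neg,
          Matrix.one_mul, Matrix.mul_one] using heq1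
      exact neg_injective hneg
    refine Matrix.posDef_iff_dotProduct_mulVec.mpr ⟨isHermitian_of_transpose (hsym 1 zero_le_one le_rfl), fun v hv => ?_⟩
    have hTq : 0 < v ⬝ᵥ (T *ᵥ v) := by simpa using (Matrix.posDef_iff_dotProduct_mulVec.mp hT).2 hv
    have hq2 : v ⬝ᵥ ((g 1 + g 1) *ᵥ v) = v ⬝ᵥ (T *ᵥ v) := by rw [h2]
    rw [Matrix.add_mulVec, dotProduct_add] at hq2
    simp only [star_trivial]
    show (0:ℝ) < v ⬝ᵥ (g ↑(⟨1, by norm_num⟩ : Set.Icc (0:ℝ) 1) *ᵥ v)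
    linarith
  have hauniv : A = Set.univ := IsClopen.eq_univ ⟨hAclosed, hAopen⟩ ⟨_, h1mem⟩
  have h0mem : (⟨0, by norm_num⟩ : Set.Icc (0:ℝ) 1) ∈ A := by rw [hauniv]; trivial
  -- g 0 = X
  have hs0 : Hs 0 = H := by rw [hHsdef]; simp
  have heq0 := hsolve 0 le_rfl zero_le_one
  rw [hs0] at heq0
  have hX : X = g 0 := by
    have hdiff : Hᵀ * (X - g 0) + (X - g 0) * H = 0 := by
      rw [Matrix.mul_sub, Matrix.sub_mul, sub_add_sub_comm, heq, heq0, sub_self]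
    have hdiff' : (Hs 0)ᵀ * (X - g 0) + (X - g 0) * (Hs 0) = 0 := by rw [hs0]; exact hdiff
    have h := hinj 0 le_rfl zero_le_one _ hdiff'
    rw [sub_eq_zero] at h
    exact h
  rw [hX]
  exact h0mem

end KleinmanAux

open Filter Topology in
/-- Kleinman monotonicity: with `K' = R⁻¹BᵀP` and `P, P'` the symmetric solutions
of the Lyapunov equations for `K` and `K'` respectively (both closed loops Hurwitz),
one has `P' ⪯ P`, i.e. `P − P'` is positive semidefinite. -/
theorem kleinman_monotone {q m : ℕ}
    (A : Matrix (Fin q) (Fin q) ℝ) (B : Matrix (Fin q) (Fin m) ℝ)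
    (Q P P' : Matrix (Fin q) (Fin q) ℝ) (R : Matrix (Fin m) (Fin m) ℝ)
    (K K' : Matrix (Fin m) (Fin q) ℝ)
    (hQ : Q.PosDef) (hR : R.PosDef)
    (hK : IsHurwitz (A - B * K))
    (hPsym : P.IsHermitian)
    (hLyap : (A - B * K)ᵀ * P + P * (A - B * K) + Q + Kᵀ * R * K = 0)
    (hK' : K' = R⁻¹ * Bᵀ * P)
    (hK'hurwitz : IsHurwitz (A - B * K'))
    (hP'sym : P'.IsHermitian)
    (hLyap' : (A - B * K')ᵀ * P' + P' * (A - B * K') + Q + K'ᵀ * R * K' = 0) :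
    (P - P').PosSemidef := by
  have hRT : Rᵀ = R := by rw [← real_conjTranspose_eq]; exact hR.isHermitian
  have hPT : Pᵀ = P := by rw [← real_conjTranspose_eq]; exact hPsym
  have hP'T : P'ᵀ = P' := by rw [← real_conjTranspose_eq]; exact hP'sym
  have hRdet : IsUnit R.det := hR.det_pos.ne'.isUnit
  have hBP : R * K' = Bᵀ * P := by
    rw [hK', ← Matrix.mul_assoc, ← Matrix.mul_assoc, Matrix.mul_nonsing_inv _ hRdet,
      Matrix.one_mul]
  have hPB : P * B = K'ᵀ * R := by
    have := congrArg Matrix.transpose hBP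
    rw [Matrix.transpose_mul, Matrix.transpose_mul, Matrix.transpose_transpose, hRT, hPT] at this
    exact this.symm
  set A' : Matrix (Fin q) (Fin q) ℝ := A - B * K' with hA'
  set Δ : Matrix (Fin q) (Fin q) ℝ := P - P' with hΔ
  set Sm : Matrix (Fin q) (Fin q) ℝ := (K - K')ᵀ * R * (K - K') with hSm
  -- rearranged Lyapunov equations
  have f2 : A'ᵀ * P' + P' * A' = -(Q + K'ᵀ * R * K') := by
    have h : (A'ᵀ * P' + P' * A') + (Q + K'ᵀ * R * K') = 0 := by rw [← hLyap']; abel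
    exact eq_neg_of_add_eq_zero_left h
  -- the core algebraic identity
  have hone : A'ᵀ * Δ + Δ * A' = -Sm := by
    have idt : A'ᵀ * Δ + Δ * A' + Sm
        = ((A - B * K)ᵀ * P + P * (A - B * K) + Q + Kᵀ * R * K)
          - ((A - B * K')ᵀ * P' + P' * (A - B * K') + Q + K'ᵀ * R * K')
          + (K - K')ᵀ * (Bᵀ * P - R * K') + (P * B - K'ᵀ * R) * (K - K') := by
      rw [hA', hΔ, hSm]
      simp only [Matrix.transpose_sub, Matrix.transpose_mul]
      simp only [Matrix.sub_mul, Matrix.mul_sub, Matrix.add_mul, Matrix.mul_add,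
        Matrix.mul_assoc]
      abel
    have hz1 : Bᵀ * P - R * K' = 0 := by rw [hBP, sub_self]
    have hz2 : P * B - K'ᵀ * R = 0 := by rw [hPB, sub_self]
    rw [hLyap, hLyap', hz1, hz2, Matrix.mul_zero, Matrix.zero_mul, sub_self] at idt
    simp only [add_zero, zero_add] at idt
    exact eq_neg_of_add_eq_zero_left idt
  -- for every ε > 0, Δ + ε • P' is positive definite
  have hkey : ∀ ε : ℝ, 0 < ε → (Δ + ε • P').PosDef := by
    intro ε hε
    have heqε : A'ᵀ * (Δ + ε • P') + (Δ + ε • P') * A'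
        = -(Sm + ε • (Q + K'ᵀ * R * K')) := by
      have hrhs : -(Sm + ε • (Q + K'ᵀ * R * K')) = -Sm + ε • (-(Q + K'ᵀ * R * K')) := by
        rw [smul_neg, neg_add]
      rw [hrhs, ← f2, ← hone, Matrix.mul_add, Matrix.add_mul, mul_smul_comm, smul_mul_assoc,
        smul_add]
      abel
    have hXsym : (Δ + ε • P')ᵀ = Δ + ε • P' := by
      rw [Matrix.transpose_add, Matrix.transpose_smul, Matrix.transpose_sub, hPT, hP'T]
    have hSmpsd : Sm.PosSemidef := by
      have h := hR.posSemidef.conjTranspose_mul_mul_same (K - K')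
      rwa [real_conjTranspose_eq] at h
    have hK'psd : (K'ᵀ * R * K').PosSemidef := by
      have h := hR.posSemidef.conjTranspose_mul_mul_same K'
      rwa [real_conjTranspose_eq] at h
    have hQK' : (Q + K'ᵀ * R * K').PosDef := hQ.add_posSemidef hK'psd
    have hTpd : (Sm + ε • (Q + K'ᵀ * R * K')).PosDef := by
      refine Matrix.PosDef.posSemidef_add hSmpsd ?_
      have hQK'T : (Q + K'ᵀ * R * K')ᵀ = Q + K'ᵀ * R * K' := by
        rw [← real_conjTranspose_eq]; exact hQK'.isHermitian
      refine Matrix.posDef_iff_dotProduct_mulVec.mpr ⟨isHermitian_of_transpose (by rw [Matrix.transpose_smul, hQK'T]), fun v hv => ?_⟩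
      rw [Matrix.smul_mulVec, dotProduct_smul, smul_eq_mul]
      exact mul_pos hε ((Matrix.posDef_iff_dotProduct_mulVec.mp hQK').2 hv)
    have hTsym : (Sm + ε • (Q + K'ᵀ * R * K'))ᵀ = Sm + ε • (Q + K'ᵀ * R * K') := by
      rw [← real_conjTranspose_eq]
      exact hTpd.isHermitian
    exact lyap_posdef A' hK'hurwitz _ _ hXsym hTsym hTpd heqε
  -- take ε → 0
  have hΔT : Δᵀ = Δ := by rw [hΔ, Matrix.transpose_sub, hPT, hP'T]
  refine Matrix.posSemidef_iff_dotProduct_mulVec.mpr ⟨isHermitian_of_transpose hΔT, fun v => ?_⟩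
  rcases eq_or_ne v 0 with rfl | hv
  · simp
  set a : ℝ := v ⬝ᵥ (Δ *ᵥ v) with ha
  set b : ℝ := v ⬝ᵥ (P' *ᵥ v) with hb
  have hab : ∀ ε : ℝ, 0 < ε → 0 < a + ε * b := by
    intro ε hε
    have := (Matrix.posDef_iff_dotProduct_mulVec.mp (hkey ε hε)).2 hv
    rw [Matrix.add_mulVec, dotProduct_add, Matrix.smul_mulVec,
      dotProduct_smul, smul_eq_mul, star_trivial] at this
    exact this
  have hge : 0 ≤ a := by
    by_contra hneg
    push_neg at hneg
    rcases le_or_gt b 0 with hb0 | hb0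
    · have := hab 1 one_pos; nlinarith
    · have := hab (-a / (2 * b)) (div_pos (by linarith) (by linarith))
      have hh : -a / (2 * b) * b = -a / 2 := by field_simp
      rw [hh] at this
      linarith
  simpa [star_trivial, ha] using hge
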